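/- arXiv:2009.12497 — 7 statements merged into one kernel-verified Lean document; each statement's English description precedes it below -/
import Mathlib

section
/- If there exists an orthogonal array OA(r,N,d,k) whose minimum distance w satisfies w ≥ k+1, then for every N' with N−w+k+1 ≤ N' ≤ N there exists an irredundant orthogonal array IrOA(r,N',d,k), i.e., an orthogonal array A' : Fin r → Fin N' → Fin d of strength k whose minimum distance is at least k+1. -/
/-- An `r × N` array over the alphabet `Fin d` is an orthogonal array of strength `k`
if for every set `T` of `k` columns and every assignment `f` of symbols to those columns,
exactly `r / d ^ k` rows agree with `f` on `T`. -/
def IsOA {r N d : ℕ} (A : Fin r → Fin N → Fin d) (k : ℕ) : Prop :=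
  ∀ T : Finset (Fin N), T.card = k → ∀ f : Fin N → Fin d,
    (Finset.univ.filter (fun i => ∀ t ∈ T, A i t = f t)).card = r / d ^ k

/-- If there exists an `OA(r,N,d,k)` with minimum distance `w ≥ k+1`, then for every
`N'` with `N - w + k + 1 ≤ N' ≤ N` there exists an irredundant orthogonal array
`IrOA(r,N',d,k)`, i.e. an orthogonal array of strength `k` with minimum distance
at least `k+1`. -/
theorem exists_irredundant_oa_of_min_dist {r N d k w : ℕ} (A : Fin r → Fin N → Fin d)
    (hA : IsOA A k)
    (hmin : ∀ i j : Fin r, i ≠ j → w ≤ hammingDist (A i) (A j))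
    (hw : k + 1 ≤ w) :
    ∀ N' : ℕ, N - w + k + 1 ≤ N' → N' ≤ N →
      ∃ A' : Fin r → Fin N' → Fin d, IsOA A' k ∧
        ∀ i j : Fin r, i ≠ j → k + 1 ≤ hammingDist (A' i) (A' j) := by
  intro N' hN1 hN2
  rcases Nat.eq_zero_or_pos r with hr | hr
  · subst hr
    exact ⟨fun i => i.elim0, fun T hT f => by simp, fun i j _ => i.elim0⟩
  · set i0 : Fin r := ⟨0, hr⟩ with hi0
    set A' : Fin r → Fin N' → Fin d := fun i y => A i (Fin.castLE hN2 y) with hA'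
    -- the range of castLE as a filter
    have hrange : (Finset.univ.map (Fin.castLEEmb hN2)) =
        Finset.univ.filter (fun x : Fin N => (x : ℕ) < N') := by
      ext x
      simp only [Finset.mem_map, Finset.mem_univ, true_and, Finset.mem_filter,
        Fin.castLEEmb_apply]
      constructor
      · rintro ⟨y, rfl⟩; exact y.isLt
      · intro h; exact ⟨⟨x, h⟩, rfl⟩
    have hcard_range : (Finset.univ.filter (fun x : Fin N => (x : ℕ) < N')).card = N' := by
      rw [← hrange]; simp
    have hcard_compl :
        (Finset.univ.filter (fun x : Fin N => ¬ (x : ℕ) < N')).card = N - N' := by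
      have := Finset.card_filter_add_card_filter_not
        (s := (Finset.univ : Finset (Fin N))) (p := fun x : Fin N => (x : ℕ) < N')
      simp only [Finset.card_univ, Fintype.card_fin] at this
      omega
    refine ⟨A', ?_, ?_⟩
    · intro T hT f
      have hT' : (T.map (Fin.castLEEmb hN2)).card = k := by simpa using hT
      set f' : Fin N → Fin d := fun t => if h : (t : ℕ) < N' then f ⟨t, h⟩ else A i0 t with hf'
      rw [← hA (T.map (Fin.castLEEmb hN2)) hT' f']
      congr 1
      apply Finset.filter_congr
      intro i _
      constructor
      · intro h t' ht'
        obtain ⟨t, ht, rfl⟩ := Finset.mem_map.mp ht'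
        have hv : ((Fin.castLEEmb hN2 t : Fin N) : ℕ) < N' := t.isLt
        simp only [hf', dif_pos hv]
        have : (⟨((Fin.castLEEmb hN2 t : Fin N) : ℕ), hv⟩ : Fin N') = t := by
          apply Fin.ext; simp
        rw [this]
        exact h t ht
      · intro h t ht
        have h2 := h _ (Finset.mem_map_of_mem _ ht)
        have hv : ((Fin.castLEEmb hN2 t : Fin N) : ℕ) < N' := t.isLt
        simp only [hf', dif_pos hv] at h2
        have : (⟨((Fin.castLEEmb hN2 t : Fin N) : ℕ), hv⟩ : Fin N') = t := by
          apply Fin.ext; simp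
        rw [this] at h2
        exact h2
    · intro i j hij
      have hd : w ≤ hammingDist (A i) (A j) := hmin i j hij
      have hkey : hammingDist (A i) (A j) ≤ hammingDist (A' i) (A' j) + (N - N') := by
        have hsub : (Finset.univ.filter fun x : Fin N => A i x ≠ A j x) ⊆
            ((Finset.univ.filter fun y : Fin N' => A' i y ≠ A' j y).map
              (Fin.castLEEmb hN2)) ∪
            (Finset.univ.filter (fun x : Fin N => ¬ (x : ℕ) < N')) := by
          intro x hx
          simp only [Finset.mem_filter, Finset.mem_univ, true_and] at hx
          by_cases hxl : (x : ℕ) < N'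
          · apply Finset.mem_union_left
            refine Finset.mem_map.mpr ⟨⟨x, hxl⟩, ?_, ?_⟩
            · simp only [Finset.mem_filter, Finset.mem_univ, true_and, hA']
              have : Fin.castLE hN2 (⟨(x : ℕ), hxl⟩ : Fin N') = x := by
                apply Fin.ext; simp
              rw [this]; exact hx
            · apply Fin.ext; simp
          · exact Finset.mem_union_right _ (by simp; omega)
        calc hammingDist (A i) (A j)
            = (Finset.univ.filter fun x : Fin N => A i x ≠ A j x).card := rfl
          _ ≤ _ := Finset.card_le_card hsub
          _ ≤ ((Finset.univ.filter fun y : Fin N' => A' i y ≠ A' j y).map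
                (Fin.castLEEmb hN2)).card +
              (Finset.univ.filter (fun x : Fin N => ¬ (x : ℕ) < N')).card :=
            Finset.card_union_le _ _
          _ = hammingDist (A' i) (A' j) + (N - N') := by
              rw [Finset.card_map, hcard_compl]; rfl
      have hle : hammingDist (A i) (A j) ≤ N := by
        calc hammingDist (A i) (A j)
            ≤ Fintype.card (Fin N) := hammingDist_le_card_fintype
          _ = N := Fintype.card_fin N
      omega
end

section
/- If linear irredundant orthogonal arrays of strength k exist for all lengths in an interval [N1, 2N1−1], they exist for all lengths at least N1: let F be a finite field, k ≥ 1, N1 ≥ 1. Suppose that for every N with N1 ≤ N ≤ 2N1 − 1 there exists a nonzero linear code C ⊆ F^N such that every nonzero codeword of C and every nonzero codeword of C⊥ has Hamming weight at least k+1. Then for every N ≥ N1 there exists such a code of length N. -/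
/-- The dual code of a linear code `C ⊆ F^ι`:
`C⊥ = {u : Σ_i u i * v i = 0 for all v ∈ C}`. -/
def dualCode {F : Type*} [Field F] {ι : Type*} [Fintype ι] (C : Submodule F (ι → F)) :
    Submodule F (ι → F) where
  carrier := {u | ∀ v ∈ C, ∑ i, u i * v i = 0}
  add_mem' := by
    intro a b ha hb v hv
    simp only [Pi.add_apply, add_mul, Finset.sum_add_distrib]
    rw [ha v hv, hb v hv, add_zero]
  zero_mem' := by intro v hv; simp
  smul_mem' := by
    intro a u hu v hv
    simp only [Pi.smul_apply, smul_eq_mul, mul_assoc, ← Finset.mul_sum]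
    rw [hu v hv, mul_zero]

section Aux

variable {F : Type*} [Field F] [DecidableEq F] {a b : ℕ}

lemma hamming_split (w : Fin (a + b) → F) :
    hammingNorm w =
      hammingNorm (fun i => w (Fin.castAdd b i)) + hammingNorm (fun j => w (Fin.natAdd a j)) := by
  simp only [hammingNorm, Finset.card_filter]
  exact Fin.sum_univ_add _

lemma append_eq_self (w : Fin (a + b) → F) :
    Fin.append (fun i => w (Fin.castAdd b i)) (fun j => w (Fin.natAdd a j)) = w := by
  funext i
  refine Fin.addCases (fun i' => ?_) (fun j' => ?_) i
  · rw [Fin.append_left]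
  · rw [Fin.append_right]

lemma combine (k : ℕ)
    {C1 : Submodule F (Fin a → F)} {C2 : Submodule F (Fin b → F)}
    (h1 : C1 ≠ ⊥) (h1w : ∀ c ∈ C1, c ≠ 0 → k + 1 ≤ hammingNorm c)
    (h1d : ∀ u ∈ dualCode C1, u ≠ 0 → k + 1 ≤ hammingNorm u)
    (h2w : ∀ c ∈ C2, c ≠ 0 → k + 1 ≤ hammingNorm c)
    (h2d : ∀ u ∈ dualCode C2, u ≠ 0 → k + 1 ≤ hammingNorm u) :
    ∃ C : Submodule F (Fin (a + b) → F), C ≠ ⊥ ∧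
      (∀ c ∈ C, c ≠ 0 → k + 1 ≤ hammingNorm c) ∧
      (∀ u ∈ dualCode C, u ≠ 0 → k + 1 ≤ hammingNorm u) := by
  set C : Submodule F (Fin (a + b) → F) :=
    (C1.comap (LinearMap.funLeft F F (Fin.castAdd b))) ⊓
    (C2.comap (LinearMap.funLeft F F (Fin.natAdd a))) with hC
  have memC : ∀ w : Fin (a + b) → F, w ∈ C ↔
      ((fun i => w (Fin.castAdd b i)) ∈ C1 ∧ (fun j => w (Fin.natAdd a j)) ∈ C2) := by
    intro w
    rw [hC, Submodule.mem_inf, Submodule.mem_comap, Submodule.mem_comap]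
    exact Iff.rfl
  -- nonzero vector in C1
  obtain ⟨v1, hv1, hv1ne⟩ : ∃ v1 ∈ C1, v1 ≠ 0 := by
    rcases Submodule.exists_mem_ne_zero_of_ne_bot h1 with ⟨v1, hv1, hne⟩
    exact ⟨v1, hv1, hne⟩
  refine ⟨C, ?_, ?_, ?_⟩
  · intro hbot
    have hmem : Fin.append v1 (0 : Fin b → F) ∈ C := by
      rw [memC]
      constructor
      · convert hv1 using 1; funext i; rw [Fin.append_left]
      · have : (fun j => Fin.append v1 (0 : Fin b → F) (Fin.natAdd a j)) = (0 : Fin b → F) := by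
          funext j; rw [Fin.append_right]
        rw [this]; exact C2.zero_mem
    rw [hbot, Submodule.mem_bot] at hmem
    apply hv1ne
    funext i
    have := congrFun hmem (Fin.castAdd b i)
    rwa [Fin.append_left] at this
  · intro c hc hcne
    rw [memC] at hc
    rw [hamming_split]
    by_cases hz : (fun i => c (Fin.castAdd b i)) = 0
    · have hz2 : (fun j => c (Fin.natAdd a j)) ≠ 0 := by
        intro hz2
        apply hcne
        rw [← append_eq_self c, hz, hz2]
        funext i
        refine Fin.addCases (fun i' => ?_) (fun j' => ?_) i
        · rw [Fin.append_left]; rfl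
        · rw [Fin.append_right]; rfl
      have := h2w _ hc.2 hz2
      omega
    · have := h1w _ hc.1 hz
      omega
  · intro u hu hune
    have hu1 : (fun i => u (Fin.castAdd b i)) ∈ dualCode C1 := by
      intro v1 hv1
      have hmem : Fin.append v1 (0 : Fin b → F) ∈ C := by
        rw [memC]
        constructor
        · convert hv1 using 1; funext i; rw [Fin.append_left]
        · have : (fun j => Fin.append v1 (0 : Fin b → F) (Fin.natAdd a j)) = (0 : Fin b → F) := by
            funext j; rw [Fin.append_right]
          rw [this]; exact C2.zero_mem
      have h0 := hu _ hmem
      rw [Fin.sum_univ_add] at h0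
      simp only [Fin.append_left, Fin.append_right] at h0
      simpa using h0
    have hu2 : (fun j => u (Fin.natAdd a j)) ∈ dualCode C2 := by
      intro v2 hv2
      have hmem : Fin.append (0 : Fin a → F) v2 ∈ C := by
        rw [memC]
        constructor
        · have : (fun i => Fin.append (0 : Fin a → F) v2 (Fin.castAdd b i)) = (0 : Fin a → F) := by
            funext i; rw [Fin.append_left]
          rw [this]; exact C1.zero_mem
        · convert hv2 using 1; funext j; rw [Fin.append_right]
      have h0 := hu _ hmem
      rw [Fin.sum_univ_add] at h0
      simp only [Fin.append_left, Fin.append_right] at h0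
      simpa using h0
    rw [hamming_split]
    by_cases hz : (fun i => u (Fin.castAdd b i)) = 0
    · have hz2 : (fun j => u (Fin.natAdd a j)) ≠ 0 := by
        intro hz2
        apply hune
        rw [← append_eq_self u, hz, hz2]
        funext i
        refine Fin.addCases (fun i' => ?_) (fun j' => ?_) i
        · rw [Fin.append_left]; rfl
        · rw [Fin.append_right]; rfl
      have := h2d _ hu2 hz2
      omega
    · have := h1d _ hu1 hz
      omega

end Aux

/-- If linear irredundant orthogonal arrays of strength `k` (equivalently, nonzero
linear codes all of whose nonzero codewords, and all nonzero codewords of the dual,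
have Hamming weight at least `k + 1`) exist for all lengths in the interval
`[N1, 2·N1 - 1]`, then they exist for all lengths `N ≥ N1`. -/
theorem linear_irOA_all_lengths (F : Type*) [Field F] [Fintype F] [DecidableEq F]
    (k N1 : ℕ) (hk : 1 ≤ k) (hN1 : 1 ≤ N1)
    (h : ∀ N : ℕ, N1 ≤ N → N ≤ 2 * N1 - 1 →
      ∃ C : Submodule F (Fin N → F), C ≠ ⊥ ∧
        (∀ c ∈ C, c ≠ 0 → k + 1 ≤ hammingNorm c) ∧
        (∀ u ∈ dualCode C, u ≠ 0 → k + 1 ≤ hammingNorm u)) :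
    ∀ N : ℕ, N1 ≤ N →
      ∃ C : Submodule F (Fin N → F), C ≠ ⊥ ∧
        (∀ c ∈ C, c ≠ 0 → k + 1 ≤ hammingNorm c) ∧
        (∀ u ∈ dualCode C, u ≠ 0 → k + 1 ≤ hammingNorm u) := by
  intro N
  induction N using Nat.strong_induction_on with
  | _ N ih =>
    intro hN
    by_cases hsmall : N ≤ 2 * N1 - 1
    · exact h N hN hsmall
    · obtain ⟨m, rfl⟩ : ∃ m, N = N1 + m := ⟨N - N1, by omega⟩
      obtain ⟨C1, h1, h1w, h1d⟩ := h N1 le_rfl (by omega)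
      obtain ⟨C2, _, h2w, h2d⟩ := ih m (by omega) (by omega)
      exact combine k h1 h1w h1d h2w h2d
end

section
/- Combinatorial core of Theorem 5, first part: let k ≥ 1 and let F be a finite field with q = |F| ≥ 2k − 1. Then for every N with 2k ≤ N ≤ q + 1 there exists a nonzero linear code C ⊆ F^N such that every nonzero codeword of C and every nonzero codeword of C⊥ has Hamming weight at least k+1 (equivalently, a linear irredundant orthogonal array IrOA(|C|, N, q, k), which yields a k-uniform state of N parties with local dimension q). -/
open Polynomial Finset in
/-- Theorem 5, first part (combinatorial core): if `k ≥ 1` and `q = |F| ≥ 2k - 1`,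
then for every `N` with `2k ≤ N ≤ q + 1` there is a nonzero linear code `C ⊆ F^N`
such that every nonzero codeword of `C` and of `C⊥` has Hamming weight at least
`k + 1` (a linear irredundant orthogonal array `IrOA(|C|, N, q, k)`, yielding a
`k`-uniform state of `N` parties with local dimension `q`). -/
theorem linear_irOA_of_card_ge_two_k_sub_one (F : Type*) [Field F] [Fintype F]
    [DecidableEq F] (k : ℕ) (hk : 1 ≤ k) (hq : 2 * k - 1 ≤ Fintype.card F) :
    ∀ N : ℕ, 2 * k ≤ N → N ≤ Fintype.card F + 1 →
      ∃ C : Submodule F (Fin N → F), C ≠ ⊥ ∧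
        (∀ c ∈ C, c ≠ 0 → k + 1 ≤ hammingNorm c) ∧
        (∀ u ∈ dualCode C, u ≠ 0 → k + 1 ≤ hammingNorm u) := by
  intro N hN1 hN2
  have hNk : k + 1 ≤ N := by omega
  have hcard : Fintype.card (Fin (N - 1)) ≤ Fintype.card F := by
    simpa using by omega
  obtain ⟨e⟩ := Function.Embedding.nonempty_iff_card_le.2 hcard
  set d : ℕ := N - k - 1 with hd
  have hdk : d + (k + 1) = N := by omega
  -- evaluation points
  set α : Fin N → F := fun i => if h : (i : ℕ) < N - 1 then e ⟨i, h⟩ else 0 with hα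
  have hαval : ∀ (i : Fin N) (h : (i : ℕ) < N - 1), α i = e ⟨i, h⟩ := fun i h => dif_pos h
  -- the evaluation map (extended RS encoding)
  set φ : Polynomial F →ₗ[F] (Fin N → F) :=
    LinearMap.pi (fun i : Fin N =>
      if h : (i : ℕ) < N - 1 then Polynomial.leval (e ⟨i, h⟩) else Polynomial.lcoeff F d) with hφdef
  have hφ : ∀ (p : Polynomial F) (i : Fin N),
      φ p i = if h : (i : ℕ) < N - 1 then p.eval (e ⟨i, h⟩) else p.coeff d := by
    intro p i
    simp only [hφdef, LinearMap.pi_apply]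
    split <;> simp [Polynomial.leval_apply, Polynomial.lcoeff_apply]
  refine ⟨(Polynomial.degreeLT F (d + 1)).map φ, ?_, ?_, ?_⟩
  · -- nontrivial
    rw [Submodule.ne_bot_iff]
    refine ⟨φ 1, ⟨1, ?_, rfl⟩, ?_⟩
    · rw [SetLike.mem_coe, Polynomial.mem_degreeLT, Polynomial.degree_one]
      exact_mod_cast WithBot.coe_lt_coe.2 (by omega)
    · intro h0
      have h1 : (0 : ℕ) < N - 1 := by omega
      have := congrFun h0 ⟨0, by omega⟩
      rw [hφ] at this
      simp only [h1, dif_pos, Polynomial.eval_one] at this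
      exact one_ne_zero this
  · -- primal distance
    rintro c ⟨p, hp, rfl⟩ hc0
    rw [SetLike.mem_coe, Polynomial.mem_degreeLT] at hp
    have hpne : p ≠ 0 := by rintro rfl; exact hc0 (map_zero φ)
    have hdeg : p.natDegree ≤ d := by
      have := (Polynomial.natDegree_lt_iff_degree_lt hpne).2 hp
      omega
    classical
    set Z : Finset (Fin N) := Finset.univ.filter (fun i => φ p i = 0) with hZ
    have hsplit : Z.card + hammingNorm (φ p) = N := by
      have h := Finset.card_filter_add_card_filter_not
        (s := (Finset.univ : Finset (Fin N))) (p := fun i => φ p i = 0)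
      simpa [hammingNorm, hZ] using h
    set Z₀ : Finset (Fin N) := Z.filter (fun i => (i : ℕ) < N - 1) with hZ₀def
    set Z₁ : Finset (Fin N) := Z.filter (fun i => ¬ (i : ℕ) < N - 1) with hZ₁def
    have hZsplit : Z₀.card + Z₁.card = Z.card :=
      Finset.card_filter_add_card_filter_not _
    have hZ₀ : Z₀.card ≤ p.natDegree := by
      have h1 : Z₀.card ≤ p.roots.toFinset.card := by
        apply Finset.card_le_card_of_injOn α
        · intro i hi
          simp only [hZ₀def, hZ, Finset.mem_coe, Finset.mem_filter, Finset.mem_univ, true_and] at hi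
          obtain ⟨hiz, hilt⟩ := hi
          rw [hφ] at hiz
          rw [Finset.mem_coe, Multiset.mem_toFinset, Polynomial.mem_roots hpne]
          rw [hαval i hilt]
          simpa only [hilt, dif_pos, Polynomial.IsRoot.def] using hiz
        · intro i hi j hj hij
          simp only [hZ₀def, hZ, Finset.mem_filter, Finset.mem_univ, true_and,
            Finset.mem_coe] at hi hj
          rw [hαval i hi.2, hαval j hj.2] at hij
          have h2 := e.injective hij
          have h3 : (i : ℕ) = (j : ℕ) := by simpa using h2
          exact Fin.ext h3
      calc Z₀.card ≤ p.roots.toFinset.card := h1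
        _ ≤ Multiset.card p.roots := p.roots.toFinset_card_le
        _ ≤ p.natDegree := p.card_roots'
    have hZ₁ : Z₁.card ≤ 1 := by
      apply Finset.card_le_one.2
      intro i hi j hj
      simp only [hZ₁def, Finset.mem_filter] at hi hj
      apply Fin.ext
      have := i.isLt; have := j.isLt
      omega
    have hZle : Z.card ≤ d := by
      by_cases hc : p.coeff d = 0
      · -- natDegree < d
        have hnd : p.natDegree < d := by
          rcases Nat.lt_or_ge p.natDegree d with h | h
          · exact h
          · exfalso
            have : p.natDegree = d := le_antisymm hdeg h
            rw [← this] at hc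
            exact Polynomial.leadingCoeff_ne_zero.2 hpne hc
        omega
      · -- last coordinate is nonzero, so Z₁ is empty
        have : Z₁ = ∅ := by
          rw [Finset.eq_empty_iff_forall_notMem]
          intro i hi
          simp only [hZ₁def, hZ, Finset.mem_filter, Finset.mem_univ, true_and] at hi
          obtain ⟨hiz, hilt⟩ := hi
          rw [hφ] at hiz
          simp only [hilt, dif_neg] at hiz
          exact hc hiz
        rw [this] at hZsplit
        simp at hZsplit
        omega
    omega
  · -- dual distance
    intro u hu hune
    by_contra hlt
    push_neg at hlt
    have hw : hammingNorm u ≤ k := by omega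
    have H : ∀ p ∈ Polynomial.degreeLT F (d + 1), ∑ i, u i * φ p i = 0 := by
      intro p hp
      exact hu (φ p) ⟨p, hp, rfl⟩
    classical
    set T : Finset (Fin N) := Finset.univ.filter (fun i => u i ≠ 0) with hT
    have hTcard : T.card ≤ k := hw
    have hlast : N - 1 < N := by omega
    set last : Fin N := ⟨N - 1, hlast⟩ with hlastdef
    set T₀ : Finset (Fin N) := T.filter (fun i => (i : ℕ) < N - 1) with hT₀def
    have hT₀sub : T₀ ⊆ T := Finset.filter_subset _ _
    have hT₀k : T₀.card ≤ k := le_trans (Finset.card_le_card hT₀sub) hTcard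
    set A : Finset F := T₀.image α with hAdef
    have hinj : Set.InjOn α T₀ := by
      intro i hi j hj hij
      simp only [hT₀def, Finset.coe_filter, Set.mem_setOf_eq] at hi hj
      rw [hαval i hi.2, hαval j hj.2] at hij
      have h2 := e.injective hij
      have h3 : (i : ℕ) = (j : ℕ) := by simpa using h2
      exact Fin.ext h3
    have hAcard : A.card = T₀.card := Finset.card_image_of_injOn hinj
    have hmemA : ∀ i ∈ T₀, α i ∈ A := fun i hi => Finset.mem_image_of_mem α hi
    have hαne : ∀ i ∈ T₀, ∀ j ∈ T₀, i ≠ j → α i ≠ α j := by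
      intro i hi j hj hij h
      exact hij (hinj hi hj h)
    -- Step A : u last = 0
    have hlastz : u last = 0 := by
      by_contra hinf
      have hlastT : last ∈ T := by simp [hT, hinf]
      have hlastT₀ : last ∉ T₀ := by
        simp [hT₀def, hlastdef]
      have hT₀k' : T₀.card ≤ k - 1 := by
        have hsub : T₀ ⊆ T.erase last := by
          intro i hi
          exact Finset.mem_erase.2 ⟨fun h => hlastT₀ (h ▸ hi), hT₀sub hi⟩
        have := Finset.card_le_card hsub
        rw [Finset.card_erase_of_mem hlastT] at this
        omega
      set m : ℕ := T₀.card with hm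
      have hmd : m ≤ d := by omega
      set p : Polynomial F := Polynomial.X ^ (d - m) * ∏ a ∈ A, (Polynomial.X - Polynomial.C a)
        with hpdef
      have hmonic : p.Monic :=
        (Polynomial.monic_X_pow _).mul
          (Polynomial.monic_prod_of_monic _ _ fun a _ => Polynomial.monic_X_sub_C a)
      have hpnd : p.natDegree = d := by
        rw [hpdef, Polynomial.natDegree_mul (pow_ne_zero (d - m) Polynomial.X_ne_zero)
          (Polynomial.monic_prod_of_monic _ _ fun a _ => Polynomial.monic_X_sub_C a).ne_zero,
          Polynomial.natDegree_X_pow, Polynomial.natDegree_prod _ _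
            (fun a _ => Polynomial.X_sub_C_ne_zero a)]
        simp only [Polynomial.natDegree_X_sub_C]
        rw [Finset.sum_const, smul_eq_mul, mul_one, hAcard]
        omega
      have hpmem : p ∈ Polynomial.degreeLT F (d + 1) := by
        rw [Polynomial.mem_degreeLT, Polynomial.degree_eq_natDegree hmonic.ne_zero, hpnd]
        exact_mod_cast WithBot.coe_lt_coe.2 (by omega)
      have hpcoeff : p.coeff d = 1 := by
        rw [← hpnd]; exact hmonic.coeff_natDegree
      have heval : ∀ i ∈ T₀, p.eval (α i) = 0 := by
        intro i hi
        rw [hpdef]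
        simp only [Polynomial.eval_mul, Polynomial.eval_prod, Polynomial.eval_sub,
          Polynomial.eval_X, Polynomial.eval_C]
        have : ∏ a ∈ A, (α i - a) = 0 :=
          Finset.prod_eq_zero (hmemA i hi) (by ring)
        rw [this, mul_zero]
      have hsum := H p hpmem
      rw [Finset.sum_eq_single last] at hsum
      · rw [hφ] at hsum
        simp only [hlastdef] at hsum
        rw [dif_neg (by omega)] at hsum
        rw [hpcoeff, mul_one] at hsum
        exact hinf hsum
      · intro b _ hb
        by_cases hub : u b = 0
        · rw [hub, zero_mul]
        · have hblt : (b : ℕ) < N - 1 := by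
            have := b.isLt
            have : (b : ℕ) ≠ N - 1 := fun h => hb (Fin.ext h)
            omega
          have hbT₀ : b ∈ T₀ := by
            simp [hT₀def, hT, hub, hblt]
          rw [hφ, dif_pos hblt, ← hαval b hblt, heval b hbT₀, mul_zero]
      · intro h; exact absurd (Finset.mem_univ last) h
    -- Step B : u vanishes on small coordinates
    have hu0 : ∀ i : Fin N, (i : ℕ) < N - 1 → u i = 0 := by
      intro t ht
      by_contra hut
      have htT₀ : t ∈ T₀ := by simp [hT₀def, hT, hut, ht]
      have hAne : (α t) ∈ A := hmemA t htT₀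
      have hidinj : Set.InjOn (id : F → F) A := Function.injective_id.injOn
      set p : Polynomial F := Lagrange.basis A (id : F → F) (α t) with hpdef
      have hpdeg : p.degree = ((A.card - 1 : ℕ) : WithBot ℕ) :=
        Lagrange.degree_basis hidinj hAne
      have hpmem : p ∈ Polynomial.degreeLT F (d + 1) := by
        rw [Polynomial.mem_degreeLT, hpdeg]
        have : A.card - 1 < d + 1 := by
          rw [hAcard]; omega
        exact_mod_cast WithBot.coe_lt_coe.2 this
      have hsum := H p hpmem
      rw [Finset.sum_eq_single t] at hsum
      · rw [hφ, dif_pos ht, ← hαval t ht] at hsum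
        have : p.eval (α t) = 1 := by
          have := Lagrange.eval_basis_self hidinj hAne
          simpa using this
        rw [this, mul_one] at hsum
        exact hut hsum
      · intro b _ hb
        by_cases hub : u b = 0
        · rw [hub, zero_mul]
        · by_cases hblt : (b : ℕ) < N - 1
          · have hbT₀ : b ∈ T₀ := by simp [hT₀def, hT, hub, hblt]
            have hne : α t ≠ α b := hαne t htT₀ b hbT₀ (fun h => hb h.symm)
            have : p.eval (α b) = 0 := by
              have := Lagrange.eval_basis_of_ne (s := A) (v := (id : F → F)) hne (hmemA b hbT₀)
              simpa using this
            rw [hφ, dif_pos hblt, ← hαval b hblt, this, mul_zero]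
          · exfalso
            apply hub
            have : b = last := by
              apply Fin.ext
              have := b.isLt
              simp only [hlastdef]
              omega
            rw [this]; exact hlastz
      · intro h; exact absurd (Finset.mem_univ t) h
    apply hune
    funext i
    by_cases hi : (i : ℕ) < N - 1
    · exact hu0 i hi
    · have : i = last := by
        apply Fin.ext
        have := i.isLt
        simp only [hlastdef]
        omega
      rw [this]; exact hlastz
end

section
/- Combinatorial core of Theorem 5, second part: let k ≥ 1 and let F be a finite field with q = |F| ≥ 4k − 2. Then for every N ≥ 2k there exists a nonzero linear code C ⊆ F^N such that every nonzero codeword of C and every nonzero codeword of C⊥ has Hamming weight at least k+1 (equivalently, a linear irredundant orthogonal array IrOA(|C|, N, q, k), which yields a k-uniform state of N parties with local dimension q). -/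
lemma mem_dualCode {F : Type*} [Field F] {ι : Type*} [Fintype ι] {C : Submodule F (ι → F)}
    {u : ι → F} : u ∈ dualCode C ↔ ∀ v ∈ C, ∑ i, u i * v i = 0 := Iff.rfl

/-- The property we want of our codes. -/
def GoodCode (F : Type*) [Field F] [DecidableEq F] (ι : Type*) [Fintype ι] (k : ℕ)
    (C : Submodule F (ι → F)) : Prop :=
  C ≠ ⊥ ∧ (∀ c ∈ C, c ≠ 0 → k + 1 ≤ hammingNorm c) ∧
    (∀ u ∈ dualCode C, u ≠ 0 → k + 1 ≤ hammingNorm u)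

lemma hammingNorm_comp_equiv {F : Type*} [DecidableEq F] [Zero F] {ι κ : Type*} [Fintype ι]
    [Fintype κ] (σ : ι ≃ κ) (w : κ → F) : hammingNorm (w ∘ σ) = hammingNorm w := by
  simp only [hammingNorm]
  apply Finset.card_bij (fun i _ => σ i)
  · intro i hi; simpa using Finset.mem_filter.mp hi |>.2
  · intro i _ j _ h; exact σ.injective h
  · intro j hj
    exact ⟨σ.symm j, by simpa using Finset.mem_filter.mp hj |>.2, by simp⟩

/-- Transport a good code along an equivalence of index types. -/
lemma goodCode_reindex {F : Type*} [Field F] [DecidableEq F] {ι κ : Type*} [Fintype ι]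
    [Fintype κ] (σ : ι ≃ κ) {k : ℕ} {C : Submodule F (ι → F)} (h : GoodCode F ι k C) :
    ∃ C' : Submodule F (κ → F), GoodCode F κ k C' := by
  obtain ⟨hne, hC, hD⟩ := h
  refine ⟨Submodule.comap (LinearMap.funLeft F F σ) C, ?_, ?_, ?_⟩
  · obtain ⟨c, hc, hc0⟩ := Submodule.exists_mem_ne_zero_of_ne_bot hne
    intro hbot
    have hmem : (c ∘ σ.symm) ∈ Submodule.comap (LinearMap.funLeft F F σ) C := by
      simpa [LinearMap.funLeft, Function.comp_def] using hc
    rw [hbot, Submodule.mem_bot] at hmem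
    exact hc0 (by funext i; have := congrFun hmem (σ i); simpa using this)
  · intro c hc hc0
    have h1 : (c ∘ σ) ∈ C := hc
    have h2 : (c ∘ σ) ≠ 0 := by
      intro h; apply hc0; funext j
      have := congrFun h (σ.symm j); simpa using this
    have := hC _ h1 h2
    rwa [hammingNorm_comp_equiv σ c] at this
  · intro u hu hu0
    have h1 : (u ∘ σ) ∈ dualCode C := by
      intro v hv
      have hv' : (v ∘ σ.symm) ∈ Submodule.comap (LinearMap.funLeft F F σ) C := by
        simpa [LinearMap.funLeft, Function.comp_def] using hv
      have := hu _ hv'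
      rw [← Equiv.sum_comp σ (fun j => u j * (v ∘ σ.symm) j)] at this
      simpa [Function.comp_def] using this
    have h2 : (u ∘ σ) ≠ 0 := by
      intro h; apply hu0; funext j
      have := congrFun h (σ.symm j); simpa using this
    have := hD _ h1 h2
    rwa [hammingNorm_comp_equiv σ u] at this

lemma hammingNorm_sum_split {F : Type*} [DecidableEq F] [Zero F] {ι κ : Type*} [Fintype ι]
    [Fintype κ] (w : ι ⊕ κ → F) :
    hammingNorm w = hammingNorm (w ∘ Sum.inl) + hammingNorm (w ∘ Sum.inr) := by
  simp only [hammingNorm, Finset.card_filter, Fintype.sum_sum_type, Function.comp]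

lemma goodCode_sum {F : Type*} [Field F] [DecidableEq F] {ι κ : Type*} [Fintype ι] [Fintype κ]
    {k : ℕ} {C₁ : Submodule F (ι → F)} {C₂ : Submodule F (κ → F)}
    (h₁ : GoodCode F ι k C₁) (h₂ : GoodCode F κ k C₂) :
    ∃ C : Submodule F (ι ⊕ κ → F), GoodCode F (ι ⊕ κ) k C := by
  obtain ⟨hne₁, hC₁, hD₁⟩ := h₁
  obtain ⟨hne₂, hC₂, hD₂⟩ := h₂
  refine ⟨Submodule.comap (LinearMap.funLeft F F Sum.inl) C₁ ⊓
    Submodule.comap (LinearMap.funLeft F F Sum.inr) C₂, ?_, ?_, ?_⟩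
  · obtain ⟨c, hc, hc0⟩ := Submodule.exists_mem_ne_zero_of_ne_bot hne₁
    intro hbot
    have hmem : (Sum.elim c 0 : ι ⊕ κ → F) ∈ (⊥ : Submodule F (ι ⊕ κ → F)) := by
      rw [← hbot]
      refine ⟨?_, ?_⟩ <;>
        simpa [LinearMap.funLeft, Function.comp_def] using (by first | exact hc | exact C₂.zero_mem)
    rw [Submodule.mem_bot] at hmem
    exact hc0 (by funext i; have := congrFun hmem (Sum.inl i); simpa using this)
  · intro c hc hc0
    obtain ⟨h1', h2'⟩ := hc
    have h1 : (c ∘ Sum.inl) ∈ C₁ := h1'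
    have h2 : (c ∘ Sum.inr) ∈ C₂ := h2'
    have hsplit := hammingNorm_sum_split c
    have : (c ∘ Sum.inl) ≠ 0 ∨ (c ∘ Sum.inr) ≠ 0 := by
      by_contra h
      push_neg at h
      apply hc0
      funext i
      rcases i with i | i
      · exact congrFun h.1 i
      · exact congrFun h.2 i
    rcases this with h | h
    · have := hC₁ _ h1 h; omega
    · have := hC₂ _ h2 h; omega
  · intro u hu hu0
    have hl : (u ∘ Sum.inl) ∈ dualCode C₁ := by
      intro v hv
      have hw : (Sum.elim v 0 : ι ⊕ κ → F) ∈ Submodule.comap (LinearMap.funLeft F F Sum.inl) C₁ ⊓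
          Submodule.comap (LinearMap.funLeft F F Sum.inr) C₂ := by
        refine ⟨?_, ?_⟩ <;>
          simpa [LinearMap.funLeft, Function.comp_def] using
            (by first | exact hv | exact C₂.zero_mem)
      have := hu _ hw
      rw [Fintype.sum_sum_type] at this
      simpa [Function.comp_def] using this
    have hr : (u ∘ Sum.inr) ∈ dualCode C₂ := by
      intro v hv
      have hw : (Sum.elim 0 v : ι ⊕ κ → F) ∈ Submodule.comap (LinearMap.funLeft F F Sum.inl) C₁ ⊓
          Submodule.comap (LinearMap.funLeft F F Sum.inr) C₂ := by
        refine ⟨?_, ?_⟩ <;>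
          simpa [LinearMap.funLeft, Function.comp_def] using
            (by first | exact hv | exact C₁.zero_mem)
      have := hu _ hw
      rw [Fintype.sum_sum_type] at this
      simpa [Function.comp_def] using this
    have hsplit := hammingNorm_sum_split u
    have : (u ∘ Sum.inl) ≠ 0 ∨ (u ∘ Sum.inr) ≠ 0 := by
      by_contra h
      push_neg at h
      apply hu0
      funext i
      rcases i with i | i
      · exact congrFun h.1 i
      · exact congrFun h.2 i
    rcases this with h | h
    · have := hD₁ _ hl h; omega
    · have := hD₂ _ hr h; omega

open Polynomial in
/-- Reed-Solomon codes give good codes for any length `n` with `2k ≤ n ≤ q`. -/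
lemma goodCode_RS (F : Type*) [Field F] [Fintype F] [DecidableEq F] (k : ℕ) (hk : 1 ≤ k)
    (ι : Type*) [Fintype ι] [DecidableEq ι] (a : ι → F) (ha : Function.Injective a)
    (hn : 2 * k ≤ Fintype.card ι) :
    ∃ C : Submodule F (ι → F), GoodCode F ι k C := by
  set n := Fintype.card ι with hn_def
  set K := n - k with hK_def
  have hKk : k ≤ K := by omega
  have hK1 : 1 ≤ K := by omega
  set φ : F[X] →ₗ[F] (ι → F) := LinearMap.pi (fun i => Polynomial.leval (a i)) with hφ
  have hφ_apply : ∀ (p : F[X]) (i : ι), φ p i = p.eval (a i) := fun p i => rfl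
  refine ⟨Submodule.map φ (degreeLT F K), ?_, ?_, ?_⟩
  · -- nonzero: image of the constant 1
    intro hbot
    have h1 : (φ (Polynomial.C 1)) ∈ Submodule.map φ (degreeLT F K) := by
      exact ⟨Polynomial.C 1, mem_degreeLT.mpr
        (lt_of_le_of_lt degree_C_le (by exact_mod_cast hK1)), rfl⟩
    rw [hbot, Submodule.mem_bot] at h1
    have hne : Nonempty ι := Fintype.card_pos_iff.mp (by omega)
    obtain ⟨i⟩ := hne
    have := congrFun h1 i
    simp [hφ_apply] at this
  · -- minimum distance of C
    rintro c ⟨p, hp, rfl⟩ hc0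
    have hp0 : p ≠ 0 := by rintro rfl; simp at hc0
    have hdeg : p.natDegree < K := by
      have := mem_degreeLT.mp hp
      exact natDegree_lt_iff_degree_lt hp0 |>.mpr this
    -- zeros of c
    set Z := Finset.univ.filter (fun i => φ p i = 0) with hZ
    have hZcard : Z.card ≤ p.natDegree := by
      have hsub : Z.image a ⊆ p.roots.toFinset := by
        intro x hx
        obtain ⟨i, hi, rfl⟩ := Finset.mem_image.mp hx
        rw [Multiset.mem_toFinset, mem_roots hp0]
        exact (Finset.mem_filter.mp hi).2
      calc Z.card = (Z.image a).card := (Finset.card_image_of_injective Z ha).symm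
        _ ≤ p.roots.toFinset.card := Finset.card_le_card hsub
        _ ≤ Multiset.card p.roots := p.roots.toFinset_card_le
        _ ≤ p.natDegree := p.card_roots'
    have hsplit : hammingNorm (φ p) + Z.card = n := by
      have := Finset.card_filter_add_card_filter_not
        (s := Finset.univ) (p := fun i => φ p i ≠ 0)
      simpa [hammingNorm, hZ, not_not, hn_def] using this
    omega
  · -- dual distance
    intro u hu hu0
    by_contra hlt
    push_neg at hlt
    set S := Finset.univ.filter (fun i => u i ≠ 0) with hS
    have hScard : S.card ≤ k := by
      have : hammingNorm u ≤ k := by omega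
      simpa [hammingNorm, hS] using this
    have hkey : ∀ i0 ∈ S, u i0 = 0 := by
      intro i0 hi0
      set p : F[X] := ∏ j ∈ S.erase i0, (X - Polynomial.C (a j)) with hp_def
      have hpdeg : p.natDegree ≤ (S.erase i0).card := by
        apply le_trans (natDegree_prod_le _ _)
        apply le_trans (Finset.sum_le_card_nsmul _ _ 1 ?_) (by simp)
        intro j _
        simp [natDegree_X_sub_C]
      have hpK : p ∈ degreeLT F K := by
        rw [mem_degreeLT]
        calc p.degree ≤ (p.natDegree : WithBot ℕ) := degree_le_natDegree
          _ < (K : WithBot ℕ) := by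
            have h1 : (S.erase i0).card ≤ k - 1 := by
              have := Finset.card_erase_of_mem hi0; omega
            exact_mod_cast Nat.lt_of_le_of_lt (le_trans hpdeg h1) (by omega)
      have hsum := hu (φ p) ⟨p, hpK, rfl⟩
      have hterm : ∀ j ∈ Finset.univ, j ≠ i0 → u j * φ p j = 0 := by
        intro j _ hj
        by_cases hjS : j ∈ S
        · have hz : φ p j = 0 := by
            rw [hφ_apply, hp_def, eval_prod]
            exact Finset.prod_eq_zero (Finset.mem_erase.mpr ⟨hj, hjS⟩) (by simp)
          rw [hz, mul_zero]
        · have : u j = 0 := by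
            by_contra h
            exact hjS (Finset.mem_filter.mpr ⟨Finset.mem_univ _, h⟩)
          simp [this]
      rw [Finset.sum_eq_single i0 hterm (by simp)] at hsum
      have hval : φ p i0 ≠ 0 := by
        rw [hφ_apply, hp_def, eval_prod]
        apply Finset.prod_ne_zero_iff.mpr
        intro j hjmem
        simp only [eval_sub, eval_X, eval_C, sub_ne_zero]
        exact fun h => (Finset.mem_erase.mp hjmem).1 (ha h).symm
      rcases mul_eq_zero.mp hsum with h | h
      · exact h
      · exact absurd h hval
    have : u = 0 := by
      funext i
      by_cases hi : i ∈ S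
      · exact hkey i hi
      · by_contra h
        exact hi (Finset.mem_filter.mpr ⟨Finset.mem_univ _, h⟩)
    exact hu0 this

open Polynomial in
/-- Extended Reed-Solomon codes: a good code of length `q + 1` over `Option F`. -/
lemma goodCode_extRS (F : Type*) [Field F] [Fintype F] [DecidableEq F] (k : ℕ) (hk : 1 ≤ k)
    (hq : 4 * k - 2 ≤ Fintype.card F) :
    ∃ C : Submodule F (Option F → F), GoodCode F (Option F) k C := by
  set q := Fintype.card F with hq_def
  have hq2k : 2 * k ≤ q := by omega
  set K := q + 1 - k with hK_def
  have hKk : k + 1 ≤ K := by omega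
  set φ : F[X] →ₗ[F] (Option F → F) :=
    LinearMap.pi (fun i => Option.rec (Polynomial.lcoeff F (K - 1))
      (fun x => Polynomial.leval x) i) with hφ
  have hφ_some : ∀ (p : F[X]) (x : F), φ p (some x) = p.eval x := fun p x => rfl
  have hφ_none : ∀ (p : F[X]), φ p none = p.coeff (K - 1) := fun p => rfl
  refine ⟨Submodule.map φ (degreeLT F K), ?_, ?_, ?_⟩
  · -- nonzero
    intro hbot
    have h1 : (φ (Polynomial.C 1)) ∈ Submodule.map φ (degreeLT F K) :=
      ⟨Polynomial.C 1, mem_degreeLT.mpr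
        (lt_of_le_of_lt degree_C_le (by exact_mod_cast by omega : (0 : WithBot ℕ) < K)), rfl⟩
    rw [hbot, Submodule.mem_bot] at h1
    obtain ⟨x⟩ : Nonempty F := Fintype.card_pos_iff.mp (by omega)
    have := congrFun h1 (some x)
    simp [hφ_some] at this
  · -- minimum distance
    rintro c ⟨p, hp, rfl⟩ hc0
    have hp0 : p ≠ 0 := by rintro rfl; simp at hc0
    have hdeg : p.natDegree < K := natDegree_lt_iff_degree_lt hp0 |>.mpr (mem_degreeLT.mp hp)
    set Zs := Finset.univ.filter (fun x : F => p.eval x = 0) with hZs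
    have hZscard : Zs.card ≤ p.natDegree := by
      have hsub : Zs ⊆ p.roots.toFinset := by
        intro x hx
        rw [Multiset.mem_toFinset, mem_roots hp0]
        exact (Finset.mem_filter.mp hx).2
      calc Zs.card ≤ p.roots.toFinset.card := Finset.card_le_card hsub
        _ ≤ Multiset.card p.roots := p.roots.toFinset_card_le
        _ ≤ p.natDegree := p.card_roots'
    set Z := Finset.univ.filter (fun i : Option F => φ p i = 0) with hZ
    have hZcard : Z.card ≤ K - 1 := by
      by_cases hco : p.coeff (K - 1) = 0
      · have hnd : p.natDegree ≤ K - 2 := by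
          by_contra h
          push_neg at h
          have hnd' : p.natDegree = K - 1 := by omega
          exact (leadingCoeff_ne_zero.mpr hp0) (by rw [leadingCoeff, hnd']; exact hco)
        have hsub : Z ⊆ insert none (Zs.image some) := by
          intro i hi
          rcases i with _ | x
          · exact Finset.mem_insert_self _ _
          · apply Finset.mem_insert_of_mem
            apply Finset.mem_image_of_mem
            have := (Finset.mem_filter.mp hi).2
            rw [hφ_some] at this
            exact Finset.mem_filter.mpr ⟨Finset.mem_univ _, this⟩
        calc Z.card ≤ (insert none (Zs.image some)).card := Finset.card_le_card hsub
          _ ≤ (Zs.image some).card + 1 := Finset.card_insert_le _ _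
          _ ≤ Zs.card + 1 := by gcongr; exact Finset.card_image_le
          _ ≤ K - 1 := by omega
      · have hsub : Z ⊆ Zs.image some := by
          intro i hi
          rcases i with _ | x
          · exact absurd ((Finset.mem_filter.mp hi).2) (by rw [hφ_none]; exact hco)
          · apply Finset.mem_image_of_mem
            have := (Finset.mem_filter.mp hi).2
            rw [hφ_some] at this
            exact Finset.mem_filter.mpr ⟨Finset.mem_univ _, this⟩
        calc Z.card ≤ (Zs.image some).card := Finset.card_le_card hsub
          _ ≤ Zs.card := Finset.card_image_le
          _ ≤ K - 1 := by omega
    have hsplit : hammingNorm (φ p) + Z.card = q + 1 := by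
      have := Finset.card_filter_add_card_filter_not
        (s := (Finset.univ : Finset (Option F))) (p := fun i => φ p i ≠ 0)
      simpa [hammingNorm, hZ, not_not, hq_def] using this
    omega
  · -- dual distance
    intro u hu hu0
    by_contra hlt
    push_neg at hlt
    set S := Finset.univ.filter (fun i : Option F => u i ≠ 0) with hS
    have hScard : S.card ≤ k := by
      have : hammingNorm u ≤ k := by omega
      simpa [hammingNorm, hS] using this
    have hsome : ∀ x0 : F, u (some x0) = 0 := by
      intro x0
      by_contra hx0
      have hx0S : some x0 ∈ S := Finset.mem_filter.mpr ⟨Finset.mem_univ _, hx0⟩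
      set T := Finset.univ.filter (fun x : F => some x ∈ S ∧ x ≠ x0) with hT
      have hTcard : T.card ≤ k - 1 := by
        have hsub : T.image some ⊆ S.erase (some x0) := by
          intro i hi
          obtain ⟨x, hx, rfl⟩ := Finset.mem_image.mp hi
          obtain ⟨h1, h2⟩ := (Finset.mem_filter.mp hx).2
          exact Finset.mem_erase.mpr ⟨by simpa using h2, h1⟩
        have h1 : T.card = (T.image some).card :=
          (Finset.card_image_of_injective T (Option.some_injective F)).symm
        have h2 := Finset.card_le_card hsub
        have h3 := Finset.card_erase_of_mem hx0S
        omega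
      set p : F[X] := ∏ t ∈ T, (X - Polynomial.C t) with hp_def
      have hpdeg : p.natDegree ≤ T.card := by
        apply le_trans (natDegree_prod_le _ _)
        apply le_trans (Finset.sum_le_card_nsmul _ _ 1 ?_) (by simp)
        intro t _
        simp [natDegree_X_sub_C]
      have hpK : p ∈ degreeLT F K := by
        rw [mem_degreeLT]
        calc p.degree ≤ (p.natDegree : WithBot ℕ) := degree_le_natDegree
          _ < (K : WithBot ℕ) := by exact_mod_cast by omega
      have hpco : φ p none = 0 := by
        rw [hφ_none]
        exact coeff_eq_zero_of_natDegree_lt (by omega)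
      have hsum := hu (φ p) ⟨p, hpK, rfl⟩
      rw [Fintype.sum_option] at hsum
      rw [hpco, mul_zero, zero_add] at hsum
      have hterm : ∀ x ∈ Finset.univ, x ≠ x0 → u (some x) * φ p (some x) = 0 := by
        intro x _ hx
        by_cases hxS : some x ∈ S
        · have hz : φ p (some x) = 0 := by
            rw [hφ_some, hp_def, eval_prod]
            exact Finset.prod_eq_zero
              (Finset.mem_filter.mpr ⟨Finset.mem_univ _, hxS, hx⟩) (by simp)
          rw [hz, mul_zero]
        · have : u (some x) = 0 := by
            by_contra h
            exact hxS (Finset.mem_filter.mpr ⟨Finset.mem_univ _, h⟩)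
          simp [this]
      rw [Finset.sum_eq_single x0 hterm (by simp)] at hsum
      have hval : φ p (some x0) ≠ 0 := by
        rw [hφ_some, hp_def, eval_prod]
        apply Finset.prod_ne_zero_iff.mpr
        intro t htmem
        simp only [eval_sub, eval_X, eval_C, sub_ne_zero]
        exact fun h => ((Finset.mem_filter.mp htmem).2.2) h.symm
      rcases mul_eq_zero.mp hsum with h | h
      · exact hx0 h
      · exact absurd h hval
    have hnone : u none = 0 := by
      set p : F[X] := X ^ (K - 1) with hp_def
      have hpK : p ∈ degreeLT F K := by
        rw [mem_degreeLT, hp_def, degree_X_pow]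
        exact_mod_cast by omega
      have hsum := hu (φ p) ⟨p, hpK, rfl⟩
      rw [Fintype.sum_option] at hsum
      have hco : φ p none = 1 := by rw [hφ_none, hp_def, coeff_X_pow]; simp
      rw [hco, mul_one] at hsum
      have : ∑ x : F, u (some x) * φ p (some x) = 0 := by
        apply Finset.sum_eq_zero
        intro x _
        rw [hsome x, zero_mul]
      rw [this, add_zero] at hsum
      exact hsum
    apply hu0
    funext i
    rcases i with _ | x
    · exact hnone
    · exact hsome x


set_option maxHeartbeats 1000000 in
lemma exists_goodCode (F : Type*) [Field F] [Fintype F] [DecidableEq F] (k : ℕ) (hk : 1 ≤ k)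
    (hq : 4 * k - 2 ≤ Fintype.card F) :
    ∀ N : ℕ, 2 * k ≤ N → ∃ C : Submodule F (Fin N → F), GoodCode F (Fin N) k C := by
  intro N
  induction N using Nat.strong_induction_on with
  | _ N ih =>
    intro hN
    by_cases h1 : N ≤ Fintype.card F
    · obtain ⟨a⟩ : Nonempty (Fin N ↪ F) :=
        Function.Embedding.nonempty_iff_card_le.mpr (by simpa using h1)
      exact goodCode_RS F k hk (Fin N) a a.injective (by simpa using hN)
    · by_cases h2 : N = Fintype.card F + 1
      · obtain ⟨C, hC⟩ := goodCode_extRS F k hk hq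
        exact goodCode_reindex (Fintype.equivFinOfCardEq (by simp [h2])) hC
      · obtain ⟨C1, hC1⟩ := ih (N - 2 * k) (by omega) (by omega)
        obtain ⟨a⟩ : Nonempty (Fin (2 * k) ↪ F) :=
          Function.Embedding.nonempty_iff_card_le.mpr (by simp; omega)
        obtain ⟨C2, hC2⟩ := goodCode_RS F k hk (Fin (2 * k)) a a.injective (by simp)
        obtain ⟨C3, hC3⟩ := goodCode_sum hC1 hC2
        exact goodCode_reindex (finSumFinEquiv.trans (finCongr (by omega))) hC3

/-- Theorem 5, second part (combinatorial core): if `k ≥ 1` and `q = |F| ≥ 4k - 2`,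
then for every `N ≥ 2k` there is a nonzero linear code `C ⊆ F^N` such that every
nonzero codeword of `C` and of `C⊥` has Hamming weight at least `k + 1` (a linear
irredundant orthogonal array `IrOA(|C|, N, q, k)`, yielding a `k`-uniform state of
`N` parties with local dimension `q`). -/
theorem linear_irOA_of_card_ge_four_k_sub_two (F : Type*) [Field F] [Fintype F]
    [DecidableEq F] (k : ℕ) (hk : 1 ≤ k) (hq : 4 * k - 2 ≤ Fintype.card F) :
    ∀ N : ℕ, 2 * k ≤ N →
      ∃ C : Submodule F (Fin N → F), C ≠ ⊥ ∧
        (∀ c ∈ C, c ≠ 0 → k + 1 ≤ hammingNorm c) ∧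
        (∀ u ∈ dualCode C, u ≠ 0 → k + 1 ≤ hammingNorm u) := by
  intro N hN
  obtain ⟨C, hC⟩ := exists_goodCode F k hk hq N hN
  exact ⟨C, hC⟩
end

section
/- Combinatorial analogue of Lemma 1 (tensor product of uniform states): let A : Fin r1 → Fin N → Fin d1 be an irredundant orthogonal array of strength k and B : Fin r2 → Fin N → Fin d2 be an irredundant orthogonal array of strength k. Then the array C : (Fin r1 × Fin r2) → Fin N → (Fin d1 × Fin d2) defined by C (i,j) n = (A i n, B j n) is an irredundant orthogonal array of strength k over the alphabet Fin d1 × Fin d2 of size d1·d2 with r1·r2 rows. -/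
/-- An array with rows indexed by a finite type `R` and entries in a finite alphabet
`S` is an orthogonal array of strength `k` if for every set `T` of `k` columns and
every assignment `f` of symbols to those columns, exactly `|R| / |S| ^ k` rows agree
with `f` on `T`. -/
def IsOAGen {R S : Type*} [Fintype R] [Fintype S] [DecidableEq S] {N : ℕ}
    (A : R → Fin N → S) (k : ℕ) : Prop :=
  ∀ T : Finset (Fin N), T.card = k → ∀ f : Fin N → S,
    (Finset.univ.filter (fun i => ∀ t ∈ T, A i t = f t)).card =
      Fintype.card R / Fintype.card S ^ k

/-- An array is irredundant (for strength `k`) if for every set of `k` columns,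
any two rows with distinct indices differ in some coordinate outside those columns. -/
def IsIrredundantGen {R S : Type*} {N : ℕ} (A : R → Fin N → S) (k : ℕ) : Prop :=
  ∀ T : Finset (Fin N), T.card = k → ∀ i j : R, i ≠ j →
    ∃ n : Fin N, n ∉ T ∧ A i n ≠ A j n

/-- In the presence of a `k`-set of columns, the number of rows of an orthogonal
array of strength `k` is divisible by `d ^ k`. -/
lemma pow_dvd_of_oa {r d N k : ℕ} (A : Fin r → Fin N → Fin d) (hA : IsOAGen A k)
    (T : Finset (Fin N)) (hT : T.card = k) : d ^ k ∣ r := by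
  classical
  rcases Nat.eq_zero_or_pos r with hr | hr
  · simp [hr]
  rcases Nat.eq_zero_or_pos k with hk | hk
  · simp [hk]
  have hTne : T.Nonempty := Finset.card_pos.mp (by omega)
  obtain ⟨t0, ht0⟩ := hTne
  have hd : 0 < d := by
    have := A ⟨0, hr⟩ t0
    exact this.pos
  have key := Finset.card_eq_sum_card_fiberwise
    (f := fun i : Fin r => fun t : {x // x ∈ T} => A i t.1)
    (s := (Finset.univ : Finset (Fin r)))
    (t := (Finset.univ : Finset ({x // x ∈ T} → Fin d)))
    (fun i _ => Finset.mem_univ _)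
  have hcards : ∀ g : {x // x ∈ T} → Fin d,
      (Finset.univ.filter (fun i : Fin r =>
        (fun t : {x // x ∈ T} => A i t.1) = g)).card = r / d ^ k := by
    intro g
    have := hA T hT (fun t => if h : t ∈ T then g ⟨t, h⟩ else ⟨0, hd⟩)
    simp only [Fintype.card_fin] at this
    rw [← this]
    congr 1
    apply Finset.filter_congr
    intro i _
    constructor
    · intro h t ht
      simp only [dif_pos ht]
      exact congrFun h ⟨t, ht⟩
    · intro h
      funext t
      have := h t.1 t.2
      simpa [dif_pos t.2] using this
  rw [Finset.card_univ, Fintype.card_fin] at key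
  rw [Finset.sum_congr rfl (fun g _ => hcards g)] at key
  rw [Finset.sum_const, Finset.card_univ, Fintype.card_fun, Fintype.card_fin,
    Fintype.card_coe, hT, smul_eq_mul] at key
  exact Dvd.intro _ key.symm

/-- Combinatorial analogue of the tensor product of uniform states: the entrywise
pairing of an `IrOA(r1, N, d1, k)` and an `IrOA(r2, N, d2, k)` is an
`IrOA(r1·r2, N, d1·d2, k)` over the product alphabet. -/
theorem irOA_product {r1 r2 N d1 d2 k : ℕ}
    (A : Fin r1 → Fin N → Fin d1) (B : Fin r2 → Fin N → Fin d2)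
    (hA : IsOAGen A k) (hAirr : IsIrredundantGen A k)
    (hB : IsOAGen B k) (hBirr : IsIrredundantGen B k) :
    IsOAGen (fun (p : Fin r1 × Fin r2) (n : Fin N) => (A p.1 n, B p.2 n)) k ∧
      IsIrredundantGen (fun (p : Fin r1 × Fin r2) (n : Fin N) => (A p.1 n, B p.2 n)) k := by
  classical
  constructor
  · intro T hT f
    have hsplit : (Finset.univ.filter (fun p : Fin r1 × Fin r2 =>
        ∀ t ∈ T, ((A p.1 t, B p.2 t) : Fin d1 × Fin d2) = f t)) =
        (Finset.univ.filter (fun i : Fin r1 => ∀ t ∈ T, A i t = (f t).1)) ×ˢ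
        (Finset.univ.filter (fun j : Fin r2 => ∀ t ∈ T, B j t = (f t).2)) := by
      ext p
      simp only [Finset.mem_filter, Finset.mem_product, Finset.mem_univ, true_and]
      constructor
      · intro h
        exact ⟨fun t ht => congrArg Prod.fst (h t ht),
               fun t ht => congrArg Prod.snd (h t ht)⟩
      · intro h t ht
        exact Prod.ext (h.1 t ht) (h.2 t ht)
    rw [hsplit, Finset.card_product, hA T hT (fun t => (f t).1), hB T hT (fun t => (f t).2)]
    rw [Fintype.card_fin, Fintype.card_fin, Fintype.card_prod, Fintype.card_prod,
      Fintype.card_fin, Fintype.card_fin, Fintype.card_fin, Fintype.card_fin]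
    rw [Nat.div_mul_div_comm (pow_dvd_of_oa A hA T hT) (pow_dvd_of_oa B hB T hT)]
    rw [mul_pow]
  · intro T hT i j hij
    rcases Prod.ext_iff.not.mp hij |> fun h => (not_and_or.mp (by simpa [Prod.ext_iff] using hij)) with h1 | h2
    · obtain ⟨n, hn, hne⟩ := hAirr T hT i.1 j.1 h1
      exact ⟨n, hn, fun h => hne (congrArg Prod.fst h)⟩
    · obtain ⟨n, hn, hne⟩ := hBirr T hT i.2 j.2 h2
      exact ⟨n, hn, fun h => hne (congrArg Prod.snd h)⟩
end

section
/- Intermediate claim of Proposition 8: let (b_j)_{j∈J} and (c_j)_{j∈J} be orthonormal families in a complex inner product space H, indexed by the same set J. If for every u, v ∈ ℂ with |u|² + |v|² = 1 the family (u • b_j + v • c_j)_{j∈J} is orthonormal, then ⟪b_s, c_t⟫ = 0 for all s, t ∈ J. -/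
/-- If `(b j)` and `(c j)` are orthonormal families in a complex inner product space
such that for every `u v : ℂ` with `|u|² + |v|² = 1` the family `(u • b j + v • c j)`
is orthonormal, then `⟪b s, c t⟫ = 0` for all `s, t`. -/
theorem inner_eq_zero_of_superpositions_orthonormal
    {H : Type*} [NormedAddCommGroup H] [InnerProductSpace ℂ H] {J : Type*}
    (b c : J → H) (hb : Orthonormal ℂ b) (hc : Orthonormal ℂ c)
    (h : ∀ u v : ℂ, ‖u‖ ^ 2 + ‖v‖ ^ 2 = 1 →
      Orthonormal ℂ (fun j => u • b j + v • c j)) :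
    ∀ s t : J, (inner ℂ (b s) (c t) : ℂ) = 0 := by
  classical
  intro s t
  set x : ℂ := inner ℂ (b s) (c t) with hx
  set y : ℂ := inner ℂ (c s) (b t) with hy
  have hcm : ∀ z : ℂ, (starRingEnd ℂ) z * z = ((‖z‖ ^ 2 : ℝ) : ℂ) := by
    intro z
    rw [← Complex.normSq_eq_conj_mul_self, Complex.sq_norm]
  have key : ∀ u v : ℂ, ‖u‖ ^ 2 + ‖v‖ ^ 2 = 1 →
      (starRingEnd ℂ) u * v * x + (starRingEnd ℂ) v * u * y = 0 := by
    intro u v huv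
    have h1 := orthonormal_iff_ite.mp (h u v huv) s t
    have hbb := orthonormal_iff_ite.mp hb s t
    have hcc := orthonormal_iff_ite.mp hc s t
    simp only [inner_add_add_self, inner_add_left, inner_add_right, inner_smul_left,
      inner_smul_right] at h1
    rw [hbb, hcc, ← hx, ← hy] at h1
    have hnorm : (starRingEnd ℂ) u * u + (starRingEnd ℂ) v * v = 1 := by
      rw [hcm, hcm]
      exact_mod_cast congrArg (Complex.ofReal) huv
    by_cases hst : s = t
    · simp only [hst, if_true] at h1 ⊢
      linear_combination h1 - hnorm
    · simp only [hst, if_false] at h1 ⊢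
      linear_combination h1
  set r : ℂ := ((Real.sqrt 2⁻¹ : ℝ) : ℂ) with hrdef
  have hr : ‖r‖ ^ 2 = 2⁻¹ := by
    rw [hrdef, Complex.norm_real, Real.norm_eq_abs, sq_abs, Real.sq_sqrt (by norm_num)]
  have hconj : (starRingEnd ℂ) r = r := Complex.conj_ofReal _
  have hr2 : r * r = 2⁻¹ := by
    rw [hrdef, ← Complex.ofReal_mul, Real.mul_self_sqrt (by norm_num)]
    norm_num
  have k1 := key r r (by rw [hr]; norm_num)
  have k2 := key r (r * Complex.I) (by
    rw [norm_mul, Complex.norm_I, mul_one, hr]; norm_num)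
  rw [hconj] at k1
  rw [hconj, map_mul, hconj, Complex.conj_I] at k2
  have e1 : x + y = 0 := by linear_combination 2 * k1 - 2 * (x + y) * hr2
  have k2' : (2⁻¹ : ℂ) * Complex.I * x - 2⁻¹ * Complex.I * y = 0 := by
    linear_combination k2 - Complex.I * (x - y) * hr2
  have e2 : x - y = 0 := by linear_combination (-2 * Complex.I) * k2' + (x - y) * Complex.I_sq
  linear_combination (e1 + e2) / 2
end

section
/- Core of Proposition 8 (impossibility of strong masking for even N, after Schmidt decomposition): let J be a nonempty finite index set, (λ_j)_{j∈J} real numbers with λ_j > 0, and (b_j)_{j∈J}, (c_j)_{j∈J} orthonormal families in a complex inner product space H. Then the following two conditions cannot hold simultaneously: (i) for every u, v ∈ ℂ with |u|² + |v|² = 1 the family (u • b_j + v • c_j)_{j∈J} is orthonormal; and (ii) the linear maps x ↦ Σ_{j∈J} λ_j · ⟪b_j, x⟫ • b_j and x ↦ Σ_{j∈J} λ_j · ⟪c_j, x⟫ • c_j are equal. -/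
/-- Core of the impossibility of strong masking for even `N`: for a nonempty finite
index set `J`, positive weights `(lam j)`, and orthonormal families `(b j)`, `(c j)`
in a complex inner product space, it cannot happen simultaneously that (i) every
normalized superposition `(u • b j + v • c j)` is an orthonormal family, and (ii) the
operators `Σ_j lam j |b j⟩⟨b j|` and `Σ_j lam j |c j⟩⟨c j|` coincide. -/
theorem no_strong_masking_core
    {H : Type*} [NormedAddCommGroup H] [InnerProductSpace ℂ H]
    {J : Type*} [Fintype J] [Nonempty J]
    (b c : J → H) (hb : Orthonormal ℂ b) (hc : Orthonormal ℂ c)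
    (lam : J → ℝ) (hlam : ∀ j, 0 < lam j) :
    ¬ ((∀ u v : ℂ, ‖u‖ ^ 2 + ‖v‖ ^ 2 = 1 →
          Orthonormal ℂ (fun j => u • b j + v • c j)) ∧
        (fun x : H => ∑ j, (((lam j : ℝ) : ℂ) * (inner ℂ (b j) x : ℂ)) • b j) =
          (fun x : H => ∑ j, (((lam j : ℝ) : ℂ) * (inner ℂ (c j) x : ℂ)) • c j)) := by
  classical
  rintro ⟨h1, h2⟩
  have hbij := orthonormal_iff_ite.mp hb
  have hcij := orthonormal_iff_ite.mp hc
  have aux : ∀ u v : ℂ, ‖u‖ ^ 2 + ‖v‖ ^ 2 = 1 → ∀ s t : J,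
      (starRingEnd ℂ) u * v * (inner ℂ (b s) (c t) : ℂ)
        + (starRingEnd ℂ) v * u * (inner ℂ (c s) (b t) : ℂ) = 0 := by
    intro u v hn s t
    have h := orthonormal_iff_ite.mp (h1 u v hn) s t
    simp only [inner_add_left, inner_add_right, inner_smul_left, inner_smul_right,
      hbij, hcij] at h
    have hu : (starRingEnd ℂ) u * u = (‖u‖ ^ 2 : ℝ) := by
      rw [Complex.conj_mul']; norm_cast
    have hv : (starRingEnd ℂ) v * v = (‖v‖ ^ 2 : ℝ) := by
      rw [Complex.conj_mul']; norm_cast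
    have hn' : ((‖u‖ ^ 2 : ℝ) : ℂ) + ((‖v‖ ^ 2 : ℝ) : ℂ) = 1 := by
      exact_mod_cast congrArg (Complex.ofReal) hn
    by_cases hst : s = t
    · simp only [hst, eq_self_iff_true, if_true] at h ⊢
      linear_combination h - hu - hv - hn'
    · simp only [hst, if_false] at h
      linear_combination h
  -- key orthogonality
  have key : ∀ s t : J, (inner ℂ (b s) (c t) : ℂ) = 0 := by
    intro s t
    have hr : (0:ℝ) < (Real.sqrt 2)⁻¹ := by positivity
    set r : ℝ := (Real.sqrt 2)⁻¹ with hrdef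
    have hr2 : r ^ 2 = 1 / 2 := by
      rw [hrdef, inv_pow, Real.sq_sqrt (by norm_num)]; norm_num
    have hnorm1 : ‖((r:ℝ):ℂ)‖ ^ 2 + ‖((r:ℝ):ℂ)‖ ^ 2 = 1 := by
      simp [Complex.norm_real, abs_of_pos hr, hr2]
      norm_num
    have hnorm2 : ‖((r:ℝ):ℂ)‖ ^ 2 + ‖((r:ℝ):ℂ) * Complex.I‖ ^ 2 = 1 := by
      simpa using hnorm1
    have e1 := aux ((r:ℝ):ℂ) ((r:ℝ):ℂ) hnorm1 s t
    have e2 := aux ((r:ℝ):ℂ) (((r:ℝ):ℂ) * Complex.I) hnorm2 s t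
    simp only [Complex.conj_ofReal, map_mul, Complex.conj_I] at e1 e2
    have hrne : ((r:ℝ):ℂ) ≠ 0 := by exact_mod_cast hr.ne'
    have e1' : (inner ℂ (b s) (c t) : ℂ) + inner ℂ (c s) (b t) = 0 :=
      mul_left_cancel₀ (mul_ne_zero hrne hrne)
        (show ((r:ℝ):ℂ) * ((r:ℝ):ℂ) * ((inner ℂ (b s) (c t) : ℂ) + inner ℂ (c s) (b t))
            = ((r:ℝ):ℂ) * ((r:ℝ):ℂ) * 0 by rw [mul_zero]; linear_combination e1)
    have e2' : (inner ℂ (b s) (c t) : ℂ) - inner ℂ (c s) (b t) = 0 :=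
      mul_left_cancel₀ (mul_ne_zero (mul_ne_zero hrne hrne) Complex.I_ne_zero)
        (show ((r:ℝ):ℂ) * ((r:ℝ):ℂ) * Complex.I * ((inner ℂ (b s) (c t) : ℂ) - inner ℂ (c s) (b t))
            = ((r:ℝ):ℂ) * ((r:ℝ):ℂ) * Complex.I * 0 by
          rw [mul_zero]; linear_combination e2)
    linear_combination (e1' + e2') / 2
  -- contradiction from (ii)
  obtain ⟨t⟩ := ‹Nonempty J›
  have h := congrFun h2 (c t)
  simp only [key, hcij, mul_zero, zero_smul, Finset.sum_const_zero, mul_ite, mul_one,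
    mul_zero, ite_smul, zero_smul] at h
  rw [Finset.sum_ite_eq' Finset.univ t (fun j => ((lam j : ℝ) : ℂ) • c j)] at h
  simp only [Finset.mem_univ, if_pos] at h
  have hct : c t ≠ 0 := hc.ne_zero t
  have : ((lam t : ℝ) : ℂ) = 0 ∨ c t = 0 := smul_eq_zero.mp h.symm
  rcases this with h' | h'
  · exact absurd (by exact_mod_cast h') (hlam t).ne'
  · exact hct h'
end
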